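/- Let Γ = {φ1, …, φN} be a set of LTLf formulas over V, let A = {A1, …, AN} be propositional variables with A ∩ V = ∅, and let Ψ = ⋀_{i=1}^{N} (A_i → φ_i). For every subset C ⊆ A, the LTLf formula Ψ ∧ ⋀_{A_i ∈ C} A_i is satisfiable if and only if the LTLf formula ⋀_{i : A_i ∈ C} φ_i is satisfiable. -/

import Mathlib

/-- Syntax of LTLf / LTL formulas (with past operators). `tt` is ⊤. -/
inductive LTLf (V : Type) : Type where
  | tt      : LTLf V
  | var     : V → LTLf V
  | not     : LTLf V → LTLf V
  | and     : LTLf V → LTLf V → LTLf V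
  | or      : LTLf V → LTLf V → LTLf V
  | next    : LTLf V → LTLf V            -- X (strong next)
  | wnext   : LTLf V → LTLf V            -- N (weak next)
  | untl    : LTLf V → LTLf V → LTLf V   -- U
  | release : LTLf V → LTLf V → LTLf V   -- R
  | ev      : LTLf V → LTLf V            -- F
  | glob    : LTLf V → LTLf V            -- G
  | yest    : LTLf V → LTLf V            -- Y
  | wyest   : LTLf V → LTLf V            -- Z
  | since   : LTLf V → LTLf V → LTLf V   -- S
  | trigger : LTLf V → LTLf V → LTLf V   -- T
  | once    : LTLf V → LTLf V            -- O
  | hist    : LTLf V → LTLf V            -- H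

variable {V W : Type}

/-- Finite-trace semantics: the trace is σ[0]…σ[n], position i (intended: i ≤ n). -/
def LTLf.finSat (σ : ℕ → Set V) (n : ℕ) : LTLf V → ℕ → Prop
  | .tt, _ => True
  | .var x, i => x ∈ σ i
  | .not φ, i => ¬ φ.finSat σ n i
  | .and φ ψ, i => φ.finSat σ n i ∧ ψ.finSat σ n i
  | .or φ ψ, i => φ.finSat σ n i ∨ ψ.finSat σ n i
  | .next φ, i => i < n ∧ φ.finSat σ n (i+1)
  | .wnext φ, i => i = n ∨ φ.finSat σ n (i+1)
  | .untl φ ψ, i => ∃ k, i ≤ k ∧ k ≤ n ∧ ψ.finSat σ n k ∧ ∀ j, i ≤ j → j < k → φ.finSat σ n j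
  | .release φ ψ, i => ¬ ∃ k, i ≤ k ∧ k ≤ n ∧ ¬ ψ.finSat σ n k ∧ ∀ j, i ≤ j → j < k → ¬ φ.finSat σ n j
  | .ev φ, i => ∃ k, i ≤ k ∧ k ≤ n ∧ φ.finSat σ n k
  | .glob φ, i => ∀ k, i ≤ k → k ≤ n → φ.finSat σ n k
  | .yest φ, i => 1 ≤ i ∧ φ.finSat σ n (i-1)
  | .wyest φ, i => i = 0 ∨ φ.finSat σ n (i-1)
  | .since φ ψ, i => ∃ k, k ≤ i ∧ ψ.finSat σ n k ∧ ∀ j, k < j → j ≤ i → φ.finSat σ n j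
  | .trigger φ ψ, i => ∀ k, k ≤ i → ψ.finSat σ n k ∨ ∃ j, k < j ∧ j ≤ i ∧ φ.finSat σ n j
  | .once φ, i => ∃ k, k ≤ i ∧ φ.finSat σ n k
  | .hist φ, i => ∀ k, k ≤ i → φ.finSat σ n k

/-- Infinite-trace (LTL) semantics. -/
def LTLf.infSat (π : ℕ → Set V) : LTLf V → ℕ → Prop
  | .tt, _ => True
  | .var x, i => x ∈ π i
  | .not φ, i => ¬ φ.infSat π i
  | .and φ ψ, i => φ.infSat π i ∧ ψ.infSat π i
  | .or φ ψ, i => φ.infSat π i ∨ ψ.infSat π i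
  | .next φ, i => φ.infSat π (i+1)
  | .wnext φ, i => φ.infSat π (i+1)
  | .untl φ ψ, i => ∃ k, i ≤ k ∧ ψ.infSat π k ∧ ∀ j, i ≤ j → j < k → φ.infSat π j
  | .release φ ψ, i => ¬ ∃ k, i ≤ k ∧ ¬ ψ.infSat π k ∧ ∀ j, i ≤ j → j < k → ¬ φ.infSat π j
  | .ev φ, i => ∃ k, i ≤ k ∧ φ.infSat π k
  | .glob φ, i => ∀ k, i ≤ k → φ.infSat π k
  | .yest φ, i => 1 ≤ i ∧ φ.infSat π (i-1)
  | .wyest φ, i => i = 0 ∨ φ.infSat π (i-1)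
  | .since φ ψ, i => ∃ k, k ≤ i ∧ ψ.infSat π k ∧ ∀ j, k < j → j ≤ i → φ.infSat π j
  | .trigger φ ψ, i => ∀ k, k ≤ i → ψ.infSat π k ∨ ∃ j, k < j ∧ j ≤ i ∧ φ.infSat π j
  | .once φ, i => ∃ k, k ≤ i ∧ φ.infSat π k
  | .hist φ, i => ∀ k, k ≤ i → φ.infSat π k

/-- Material implication. -/
def LTLf.imp (a b : LTLf V) : LTLf V := .or a.not b

/-- Bi-implication. -/
def LTLf.iff (a b : LTLf V) : LTLf V := .and (a.imp b) (b.imp a)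

/-- Variable renaming. -/
def LTLf.map (f : V → W) : LTLf V → LTLf W
  | .tt => .tt
  | .var x => .var (f x)
  | .not φ => .not (φ.map f)
  | .and φ ψ => .and (φ.map f) (ψ.map f)
  | .or φ ψ => .or (φ.map f) (ψ.map f)
  | .next φ => .next (φ.map f)
  | .wnext φ => .wnext (φ.map f)
  | .untl φ ψ => .untl (φ.map f) (ψ.map f)
  | .release φ ψ => .release (φ.map f) (ψ.map f)
  | .ev φ => .ev (φ.map f)
  | .glob φ => .glob (φ.map f)
  | .yest φ => .yest (φ.map f)
  | .wyest φ => .wyest (φ.map f)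
  | .since φ ψ => .since (φ.map f) (ψ.map f)
  | .trigger φ ψ => .trigger (φ.map f) (ψ.map f)
  | .once φ => .once (φ.map f)
  | .hist φ => .hist (φ.map f)

/-- The `end` variable used in the LTLf → LTL translation. -/
def endVar : LTLf (Option V) := .var none

/-- The translation t(·) from LTLf over `V` to LTL over `V ∪ {end}` (here `Option V`,
with `none` playing the role of `end`). -/
def ftol : LTLf V → LTLf (Option V)
  | .tt => .tt
  | .var x => .var (some x)
  | .not φ => .not (ftol φ)
  | .and φ ψ => .and (ftol φ) (ftol ψ)
  | .or φ ψ => .or (ftol φ) (ftol ψ)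
  | .next φ => .next (.and (.not endVar) (ftol φ))
  | .wnext φ => .next (.or endVar (ftol φ))
  | .untl φ ψ => .untl (ftol φ) (.and (.not endVar) (ftol ψ))
  | .release φ ψ => .release (ftol φ) (.or endVar (ftol ψ))
  | .ev φ => .ev (.and (.not endVar) (ftol φ))
  | .glob φ => .glob (.or endVar (ftol φ))
  | .yest φ => .yest (ftol φ)
  | .wyest φ => .wyest (ftol φ)
  | .since φ ψ => .since (ftol φ) (ftol ψ)
  | .trigger φ ψ => .trigger (ftol φ) (ftol ψ)
  | .once φ => .once (ftol φ)
  | .hist φ => .hist (ftol φ)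

/-- The LTL formula `F end ∧ G(end → X end) ∧ t(φ)` of Corollary 1. -/
def ftolFull (φ : LTLf V) : LTLf (Option V) :=
  .and (.ev endVar) (.and (.glob (endVar.imp (.next endVar))) (ftol φ))

/-- Conjunction of a list of formulas (⊤ for the empty list). -/
def bigAnd : List (LTLf V) → LTLf V := List.foldr .and .tt

/-- The activation variable `A_i` (the right summand of `V ⊕ Fin N`). -/
def actVar (V : Type) (N : ℕ) (i : Fin N) : LTLf (V ⊕ Fin N) := .var (.inr i)

/-- The formula `Ψ = ⋀_{i=1}^{N} (A_i → φ_i)` over `V ∪ A`. -/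
def PsiF (V : Type) (N : ℕ) (φ : Fin N → LTLf V) : LTLf (V ⊕ Fin N) :=
  bigAnd ((List.finRange N).map fun i => (actVar V N i).imp ((φ i).map Sum.inl))

theorem LTLf.map_finSat (f : V → W) (σ : ℕ → Set W) (n : ℕ) (φ : LTLf V) :
    ∀ i, (φ.map f).finSat σ n i ↔ φ.finSat (fun j => f ⁻¹' σ j) n i := by
  induction φ with
  | _ => intro i; simp [LTLf.map, LTLf.finSat, *]

theorem bigAnd_finSat (L : List (LTLf V)) (σ : ℕ → Set V) (n i : ℕ) :
    (bigAnd L).finSat σ n i ↔ ∀ ψ ∈ L, ψ.finSat σ n i := by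
  induction L with
  | nil => simp [bigAnd, LTLf.finSat]
  | cons a L ih => simp [bigAnd, LTLf.finSat, bigAnd] at ih ⊢; tauto

/-- for every subset C ⊆ A, the LTLf formula `Ψ ∧ ⋀_{A_i ∈ C} A_i` is
satisfiable iff the LTLf formula `⋀_{i : A_i ∈ C} φ_i` is satisfiable. -/
theorem activated_sat_iff_subset_sat (V : Type) (N : ℕ) (φ : Fin N → LTLf V)
    (C : Finset (Fin N)) :
    (∃ (σ : ℕ → Set (V ⊕ Fin N)) (n : ℕ),
        ((PsiF V N φ).and (bigAnd (C.toList.map (actVar V N)))).finSat σ n 0) ↔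
    (∃ (σ : ℕ → Set V) (n : ℕ), (bigAnd (C.toList.map φ)).finSat σ n 0) := by
  constructor
  · rintro ⟨σ, n, hΨ, hC⟩
    refine ⟨fun j => {v | Sum.inl v ∈ σ j}, n, ?_⟩
    rw [PsiF] at hΨ
    rw [bigAnd_finSat] at hΨ hC ⊢
    simp only [List.mem_map, List.mem_finRange] at hΨ
    simp only [List.mem_map] at hC ⊢
    rintro ψ ⟨i, hi, rfl⟩
    have hA : (actVar V N i).finSat σ n 0 := hC _ ⟨i, hi, rfl⟩
    have := hΨ ((actVar V N i).imp ((φ i).map Sum.inl)) ⟨i, trivial, rfl⟩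
    rcases this with h | h
    · exact absurd hA h
    · exact (LTLf.map_finSat Sum.inl σ n (φ i) 0).mp h
  · rintro ⟨σ, n, h⟩
    refine ⟨fun j => (Sum.inl '' σ j) ∪ (Sum.inr '' {i | i ∈ C}), n, ?_, ?_⟩
    · rw [PsiF, bigAnd_finSat]
      simp only [List.mem_map, List.mem_finRange]
      rintro ψ ⟨i, -, rfl⟩
      by_cases hiC : i ∈ C
      · right
        rw [LTLf.map_finSat]
        rw [bigAnd_finSat] at h
        have hσ : (fun j => Sum.inl ⁻¹' ((Sum.inl '' σ j) ∪ (Sum.inr '' {i | i ∈ C})) : ℕ → Set V) = σ := by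
          funext j; ext v; simp
        rw [hσ]
        exact h (φ i) (List.mem_map.mpr ⟨i, Finset.mem_toList.mpr hiC, rfl⟩)
      · left
        simp only [actVar, LTLf.finSat, Set.mem_union, Set.mem_image]
        rintro (⟨v, -, hv⟩ | ⟨k, hk, hv⟩)
        · cases hv
        · exact hiC (Sum.inr.inj hv ▸ hk)
    · rw [bigAnd_finSat]
      simp only [List.mem_map]
      rintro ψ ⟨i, hi, rfl⟩
      simp only [actVar, LTLf.finSat, Set.mem_union, Set.mem_image]
      exact Or.inr ⟨i, Finset.mem_toList.mp hi, rfl⟩
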